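/- Let p be an odd prime. The set of pairs (m,k) of positive integers with m dividing p-1, (√p−1)² < km² < (√p+1)², and km² ≡ 1 (mod p) equals: {(1,1),(4,1),(7,1),(1,2)} (as (k,m) pairs with k the first entry) if p = 3; {(1+p,1)} if p ≡ 1 (mod 4); and {(1+p,1), ((1+p)/4, 2)} if p ≠ 3 and p ≡ 3 (mod 4). -/
import Mathlib


/-- Let `p` be an odd prime.  The set of pairs `(k, m)` of positive integers
with `m ∣ p - 1`, `(√p - 1)² < k·m² < (√p + 1)²` and `k·m² ≡ 1 (mod p)` equals
`{(1,1), (4,1), (7,1), (1,2)}` if `p = 3`; `{(1+p, 1)}` if `p ≡ 1 (mod 4)`; and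
`{(1+p, 1), ((1+p)/4, 2)}` if `p ≠ 3` and `p ≡ 3 (mod 4)`. -/
lemma bound_iff' (p n : ℕ) (hp : 0 < p) :
    ((Real.sqrt p - 1) ^ 2 < (n : ℝ) ∧ (n : ℝ) < (Real.sqrt p + 1) ^ 2) ↔
      ((n : ℤ) - (p + 1)) ^ 2 < 4 * p := by
  have hs : Real.sqrt p * Real.sqrt p = p := Real.mul_self_sqrt (by positivity)
  have hs0 : 0 < Real.sqrt p := Real.sqrt_pos.mpr (by exact_mod_cast hp)
  constructor
  · rintro ⟨h1, h2⟩
    have : ((n : ℝ) - (p + 1)) ^ 2 < 4 * p := by nlinarith [h1, h2, hs]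
    exact_mod_cast this
  · intro h
    have h' : ((n : ℝ) - (p + 1)) ^ 2 < 4 * p := by exact_mod_cast h
    constructor
    · nlinarith [sq_nonneg ((n : ℝ) - (p + 1) + 2 * Real.sqrt p)]
    · nlinarith [sq_nonneg ((n : ℝ) - (p + 1) - 2 * Real.sqrt p)]


/-- Let `p` be an odd prime.  The set of pairs `(k, m)` of positive integers
with `m ∣ p - 1`, `(√p - 1)² < k·m² < (√p + 1)²` and `k·m² ≡ 1 (mod p)` equals
`{(1,1), (4,1), (7,1), (1,2)}` if `p = 3`; `{(1+p, 1)}` if `p ≡ 1 (mod 4)`; and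
`{(1+p, 1), ((1+p)/4, 2)}` if `p ≠ 3` and `p ≡ 3 (mod 4)`. -/

theorem stmt_1 (p : ℕ) (hp : p.Prime) (hodd : Odd p) :
    {km : ℕ × ℕ | 0 < km.1 ∧ 0 < km.2 ∧ km.2 ∣ p - 1 ∧
        (Real.sqrt p - 1) ^ 2 < ((km.1 * km.2 ^ 2 : ℕ) : ℝ) ∧
        ((km.1 * km.2 ^ 2 : ℕ) : ℝ) < (Real.sqrt p + 1) ^ 2 ∧
        km.1 * km.2 ^ 2 ≡ 1 [MOD p]} =
      if p = 3 then {(1, 1), (4, 1), (7, 1), (1, 2)}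
      else if p % 4 = 1 then {(1 + p, 1)}
      else {(1 + p, 1), ((1 + p) / 4, 2)} := by
  have hp0 : 0 < p := hp.pos
  have hp2 : 2 ≤ p := hp.two_le
  have hpne2 : p ≠ 2 := by rintro rfl; exact (Nat.not_odd_iff_even.mpr (by decide)) hodd
  have hp1mod : 1 % p = 1 := Nat.mod_eq_of_lt (by omega)
  -- key rewriting of the last three conjuncts
  have key : ∀ n : ℕ,
      ((Real.sqrt p - 1) ^ 2 < (n : ℝ) ∧ (n : ℝ) < (Real.sqrt p + 1) ^ 2 ∧
        n ≡ 1 [MOD p]) ↔ (((n : ℤ) - (p + 1)) ^ 2 < 4 * p ∧ n % p = 1) := by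
    intro n
    rw [show (n ≡ 1 [MOD p]) ↔ n % p = 1 from by unfold Nat.ModEq; rw [hp1mod]]
    constructor
    · rintro ⟨h1, h2, h3⟩
      exact ⟨(bound_iff' p n hp0).mp ⟨h1, h2⟩, h3⟩
    · rintro ⟨h1, h2⟩
      obtain ⟨a, b⟩ := (bound_iff' p n hp0).mpr h1
      exact ⟨a, b, h2⟩
  by_cases h3 : p = 3
  · subst h3
    rw [if_pos rfl]
    ext ⟨k, m⟩
    simp only [Set.mem_setOf_eq, and_assoc, Set.mem_insert_iff, Set.mem_singleton_iff,
      Prod.mk.injEq]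
    rw [key (k * m ^ 2)]
    constructor
    · rintro ⟨hk, hm, hmd, hb, hmod⟩
      have hm2 : m = 1 ∨ m = 2 := by
        have := Nat.le_of_dvd (by norm_num) hmd
        interval_cases m <;> simp_all
      have hle : k * m ^ 2 ≤ 7 := by
        by_contra hcon
        have h8 : (8 : ℤ) ≤ ((k * m ^ 2 : ℕ) : ℤ) := by
          exact_mod_cast (by omega : 8 ≤ k * m ^ 2)
        norm_num at hb
        nlinarith [hb, h8, mul_self_nonneg (((k * m ^ 2 : ℕ) : ℤ) - 8)]
      rcases hm2 with rfl | rfl <;> simp_all <;> omega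
    · rintro (⟨rfl, rfl⟩ | ⟨rfl, rfl⟩ | ⟨rfl, rfl⟩ | ⟨rfl, rfl⟩) <;>
        refine ⟨by norm_num, by norm_num, by norm_num, ?_, by norm_num⟩ <;> norm_num
  · have hpne4 : p ≠ 4 := by rintro rfl; norm_num at hp
    have hp5 : 5 ≤ p := by omega
    have hp5' : (5 : ℤ) ≤ (p : ℤ) := by exact_mod_cast hp5
    -- main: for n ≥ 1, integer condition iff n = p + 1
    have main : ∀ n : ℕ,
        ((((n : ℤ) - (p + 1)) ^ 2 < 4 * p ∧ n % p = 1)) ↔ n = p + 1 := by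
      intro n
      constructor
      · rintro ⟨hb, hmod⟩
        have hn1 : 1 ≤ n := by
          rcases Nat.eq_zero_or_pos n with rfl | h
          · rw [Nat.zero_mod] at hmod; omega
          · exact h
        have hmeq : n ≡ 1 [MOD p] := by unfold Nat.ModEq; rw [hp1mod]; exact hmod
        obtain ⟨c, hc⟩ := (Nat.modEq_iff_dvd' hn1).mp hmeq.symm
        have hnc : n = p * c + 1 := by omega
        have hb' : ((p : ℤ) * ((c : ℤ) - 1)) ^ 2 < 4 * (p : ℤ) := by
          have hcast : (n : ℤ) = (p : ℤ) * c + 1 := by exact_mod_cast hnc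
          have hrw : (n : ℤ) - ((p : ℤ) + 1) = (p : ℤ) * ((c : ℤ) - 1) := by
            rw [hcast]; ring
          rw [← hrw]; exact_mod_cast hb
        have hc1 : c = 1 := by
          by_contra hne
          have h1 : 1 ≤ ((c : ℤ) - 1) ^ 2 := by
            have : (c : ℤ) ≠ 1 := by exact_mod_cast hne
            rcases lt_or_gt_of_ne this with h | h <;> nlinarith
          nlinarith [mul_le_mul_of_nonneg_left h1 (sq_nonneg ((p : ℤ)))]
        rw [hc1] at hnc; omega
      · rintro rfl
        constructor
        · have : ((p : ℤ) + 1 - (p + 1)) ^ 2 = 0 := by ring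
          push_cast
          rw [show ((p : ℤ) + 1 - ((p : ℤ) + 1)) ^ 2 = 0 from by ring]
          positivity
        · rw [Nat.add_mod_left]; exact hp1mod
    rw [if_neg h3]
    have hiff : ∀ k m : ℕ, ((Real.sqrt p - 1) ^ 2 < ((k * m ^ 2 : ℕ) : ℝ) ∧
        ((k * m ^ 2 : ℕ) : ℝ) < (Real.sqrt p + 1) ^ 2 ∧ k * m ^ 2 ≡ 1 [MOD p]) ↔
        k * m ^ 2 = p + 1 := by
      intro k m; rw [key (k * m ^ 2), main (k * m ^ 2)]
    by_cases h14 : p % 4 = 1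
    · rw [if_pos h14]
      ext ⟨k, m⟩
      simp only [Set.mem_setOf_eq, and_assoc, Set.mem_singleton_iff, Prod.mk.injEq]
      rw [hiff k m]
      constructor
      · rintro ⟨hk, hm, hmd, heq⟩
        have hmm : m ∣ p + 1 := by
          have h1 : m ∣ m ^ 2 := dvd_pow_self m (by norm_num)
          have h2 : m ^ 2 ∣ p + 1 := ⟨k, by rw [← heq]; ring⟩
          exact h1.trans h2
        have hm2 : m ∣ 2 := by
          have := Nat.dvd_sub hmm hmd
          rwa [show p + 1 - (p - 1) = 2 from by omega] at this
        have : m = 1 ∨ m = 2 := by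
          have := Nat.le_of_dvd (by norm_num) hm2
          interval_cases m <;> simp_all
        rcases this with rfl | rfl
        · constructor <;> omega
        · exfalso; simp only [show (2:ℕ)^2 = 4 from rfl] at heq; omega
      · rintro ⟨rfl, rfl⟩
        exact ⟨by omega, by norm_num, one_dvd _, by ring⟩
    · rw [if_neg h14]
      have h34 : p % 4 = 3 := by
        have : p % 2 = 1 := Nat.odd_iff.mp hodd
        omega
      ext ⟨k, m⟩
      simp only [Set.mem_setOf_eq, and_assoc, Set.mem_insert_iff, Set.mem_singleton_iff,
        Prod.mk.injEq]
      rw [hiff k m]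
      constructor
      · rintro ⟨hk, hm, hmd, heq⟩
        have hmm : m ∣ p + 1 := by
          have h1 : m ∣ m ^ 2 := dvd_pow_self m (by norm_num)
          have h2 : m ^ 2 ∣ p + 1 := ⟨k, by rw [← heq]; ring⟩
          exact h1.trans h2
        have hm2 : m ∣ 2 := by
          have := Nat.dvd_sub hmm hmd
          rwa [show p + 1 - (p - 1) = 2 from by omega] at this
        have : m = 1 ∨ m = 2 := by
          have := Nat.le_of_dvd (by norm_num) hm2
          interval_cases m <;> simp_all
        rcases this with rfl | rfl
        · left; constructor <;> omega
        · right
          simp only [show (2:ℕ)^2 = 4 from rfl] at heq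
          constructor <;> omega
      · rintro (⟨rfl, rfl⟩ | ⟨rfl, rfl⟩)
        · exact ⟨by omega, by norm_num, one_dvd _, by ring⟩
        · refine ⟨by omega, by norm_num, ?_, ?_⟩
          · have : p % 2 = 1 := Nat.odd_iff.mp hodd
            omega
          · simp only [show (2:ℕ)^2 = 4 from rfl]
            omega
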